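/- Let L be the 8-dimensional Lie algebra S₁ with basis x₁, ..., x₈ and nonzero brackets [x₁,x₂] = x₆, [x₁,x₄] = x₈, [x₃,x₅] = x₈, [x₂,x₇] = x₈. Then L is nilpotent of class 2, dim [L,L] = 2, Z(L) = [L,L] is spanned by x₆ and x₈, and L is a stem Lie algebra (i.e., Z(L) ⊆ [L,L]). -/

import Mathlib

/-- the Lie algebra S₁ (brackets [x₁,x₂]=x₆, [x₁,x₄]=x₈, [x₃,x₅]=x₈, [x₂,x₇]=x₈) is nilpotent of class 2, has 2-dimensional derived subalgebra, Z(L)=[L,L] spanned by x₆,x₈, and is a stem Lie algebra. -/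
theorem stmt_16 (K : Type*) [Field K] (L : Type*) [LieRing L] [LieAlgebra K L]
    (b : Module.Basis (Fin 8) K L)
    (h1 : ⁅b 0, b 1⁆ = b 5)
    (h2 : ⁅b 0, b 3⁆ = b 7)
    (h3 : ⁅b 2, b 4⁆ = b 7)
    (h4 : ⁅b 1, b 6⁆ = b 7)
    (hzero : ∀ i j : Fin 8,
      (i, j) ∉ ({(0,1),(1,0),(0,3),(3,0),(2,4),(4,2),(1,6),(6,1)} : Set (Fin 8 × Fin 8)) → ⁅b i, b j⁆ = 0) :
    (LieModule.lowerCentralSeries K L L 2 = ⊥ ∧ LieModule.lowerCentralSeries K L L 1 ≠ ⊥) ∧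
    Module.finrank K (LieModule.lowerCentralSeries K L L 1).toSubmodule = 2 ∧
    (LieAlgebra.center K L).toSubmodule = Submodule.span K {b 5, b 7} ∧
    (LieAlgebra.center K L).toSubmodule = (LieModule.lowerCentralSeries K L L 1).toSubmodule ∧
    (LieAlgebra.center K L).toSubmodule ≤ (LieModule.lowerCentralSeries K L L 1).toSubmodule := by
  haveI : Module.Finite K L := Module.Finite.of_basis b
  have sum_lie' : ∀ (f : Fin 8 → L) (y : L), ⁅∑ i, f i, y⁆ = ∑ i, ⁅f i, y⁆ := fun f y =>
    map_sum (AddMonoidHom.mk' (fun x => ⁅x, y⁆) (fun a b => add_lie a b y)) f Finset.univ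
  have lie_sum' : ∀ (x : L) (f : Fin 8 → L), ⁅x, ∑ i, f i⁆ = ∑ i, ⁅x, f i⁆ := fun x f =>
    map_sum (AddMonoidHom.mk' (fun w => ⁅x, w⁆) (fun a b => lie_add x a b)) f Finset.univ
  -- brackets of basis elements lie in span {b 5, b 7}
  have key : ∀ i j : Fin 8, ⁅b i, b j⁆ ∈ Submodule.span K ({b 5, b 7} : Set L) := by
    intro i j
    by_cases h : (i, j) ∈ ({(0,1),(1,0),(0,3),(3,0),(2,4),(4,2),(1,6),(6,1)} : Set (Fin 8 × Fin 8))
    · simp only [Set.mem_insert_iff, Set.mem_singleton_iff, Prod.mk.injEq] at h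
      have hmem5 : (b 5 : L) ∈ Submodule.span K ({b 5, b 7} : Set L) :=
        Submodule.subset_span (by simp)
      have hmem7 : (b 7 : L) ∈ Submodule.span K ({b 5, b 7} : Set L) :=
        Submodule.subset_span (by simp)
      rcases h with ⟨hi, hj⟩|⟨hi, hj⟩|⟨hi, hj⟩|⟨hi, hj⟩|⟨hi, hj⟩|⟨hi, hj⟩|⟨hi, hj⟩|⟨hi, hj⟩ <;>
        subst hi <;> subst hj
      · rw [h1]; exact hmem5
      · rw [← lie_skew, h1]; exact neg_mem hmem5
      · rw [h2]; exact hmem7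
      · rw [← lie_skew, h2]; exact neg_mem hmem7
      · rw [h3]; exact hmem7
      · rw [← lie_skew, h3]; exact neg_mem hmem7
      · rw [h4]; exact hmem7
      · rw [← lie_skew, h4]; exact neg_mem hmem7
    · rw [hzero i j h]; exact zero_mem _
  -- all brackets lie in span {b 5, b 7}
  have brkt : ∀ x y : L, ⁅x, y⁆ ∈ Submodule.span K ({b 5, b 7} : Set L) := by
    intro x y
    rw [← b.sum_repr x, ← b.sum_repr y]
    rw [sum_lie' _ _]
    refine Submodule.sum_mem _ fun i _ => ?_
    rw [lie_sum' _ _]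
    refine Submodule.sum_mem _ fun j _ => ?_
    rw [smul_lie, lie_smul]
    exact Submodule.smul_mem _ _ (Submodule.smul_mem _ _ (key i j))
  -- b 5 and b 7 are central
  have c57 : ∀ x : L, ⁅x, (b 5 : L)⁆ = 0 ∧ ⁅x, (b 7 : L)⁆ = 0 := by
    intro x
    have hb5 : ∀ i : Fin 8, ⁅b i, (b 5 : L)⁆ = 0 := by
      intro i
      apply hzero
      simp only [Set.mem_insert_iff, Set.mem_singleton_iff]
      fin_cases i <;> decide
    have hb7 : ∀ i : Fin 8, ⁅b i, (b 7 : L)⁆ = 0 := by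
      intro i
      apply hzero
      simp only [Set.mem_insert_iff, Set.mem_singleton_iff]
      fin_cases i <;> decide
    constructor <;>
    · rw [← b.sum_repr x, sum_lie' _ _]
      refine Finset.sum_eq_zero fun i _ => ?_
      rw [smul_lie]
      first
      | rw [hb5 i, smul_zero]
      | rw [hb7 i, smul_zero]
  -- span {b5, b7} ≤ center
  have span_le_center : Submodule.span K ({b 5, b 7} : Set L) ≤ (LieAlgebra.center K L).toSubmodule := by
    rw [Submodule.span_le]
    rintro z hz
    simp only [Set.mem_insert_iff, Set.mem_singleton_iff] at hz
    rcases hz with rfl | rfl <;>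
    · show _ ∈ LieAlgebra.center K L
      rw [LieModule.mem_maxTrivSubmodule]
      intro x
      rcases c57 x with ⟨hx5, hx7⟩
      first | exact hx5 | exact hx7
  -- center ≤ span {b5, b7}
  have center_le_span : (LieAlgebra.center K L).toSubmodule ≤ Submodule.span K ({b 5, b 7} : Set L) := by
    intro z hz
    have hz' : ∀ x : L, ⁅x, z⁆ = 0 := (LieModule.mem_maxTrivSubmodule K L L z).mp hz
    -- compute brackets with basis elements
    have hrep : ∀ i : Fin 8, ⁅b i, z⁆ = ∑ j : Fin 8, b.repr z j • ⁅b i, b j⁆ := by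
      intro i
      conv_lhs => rw [← b.sum_repr z]
      rw [lie_sum' _ _]
      exact Finset.sum_congr rfl fun j _ => by rw [lie_smul]
    have e0 : (0 : L) = b.repr z 1 • b 5 + b.repr z 3 • b 7 := by
      rw [← hz' (b 0), hrep 0, Fin.sum_univ_eight, h1, h2]
      rw [hzero 0 0 (by simp only [Set.mem_insert_iff, Set.mem_singleton_iff]; decide), hzero 0 2 (by simp only [Set.mem_insert_iff, Set.mem_singleton_iff]; decide), hzero 0 4 (by simp only [Set.mem_insert_iff, Set.mem_singleton_iff]; decide),
        hzero 0 5 (by simp only [Set.mem_insert_iff, Set.mem_singleton_iff]; decide), hzero 0 6 (by simp only [Set.mem_insert_iff, Set.mem_singleton_iff]; decide), hzero 0 7 (by simp only [Set.mem_insert_iff, Set.mem_singleton_iff]; decide)]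
      simp
    have e1 : (0 : L) = b.repr z 0 • (-b 5) + b.repr z 6 • b 7 := by
      have hb10 : ⁅b 1, (b 0 : L)⁆ = -b 5 := by rw [← lie_skew, h1]
      rw [← hz' (b 1), hrep 1, Fin.sum_univ_eight, hb10, h4]
      rw [hzero 1 1 (by simp only [Set.mem_insert_iff, Set.mem_singleton_iff]; decide), hzero 1 2 (by simp only [Set.mem_insert_iff, Set.mem_singleton_iff]; decide), hzero 1 3 (by simp only [Set.mem_insert_iff, Set.mem_singleton_iff]; decide),
        hzero 1 4 (by simp only [Set.mem_insert_iff, Set.mem_singleton_iff]; decide), hzero 1 5 (by simp only [Set.mem_insert_iff, Set.mem_singleton_iff]; decide), hzero 1 7 (by simp only [Set.mem_insert_iff, Set.mem_singleton_iff]; decide)]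
      simp
    have e2 : (0 : L) = b.repr z 4 • b 7 := by
      rw [← hz' (b 2), hrep 2, Fin.sum_univ_eight, h3]
      rw [hzero 2 0 (by simp only [Set.mem_insert_iff, Set.mem_singleton_iff]; decide), hzero 2 1 (by simp only [Set.mem_insert_iff, Set.mem_singleton_iff]; decide), hzero 2 2 (by simp only [Set.mem_insert_iff, Set.mem_singleton_iff]; decide),
        hzero 2 3 (by simp only [Set.mem_insert_iff, Set.mem_singleton_iff]; decide), hzero 2 5 (by simp only [Set.mem_insert_iff, Set.mem_singleton_iff]; decide), hzero 2 6 (by simp only [Set.mem_insert_iff, Set.mem_singleton_iff]; decide),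
        hzero 2 7 (by simp only [Set.mem_insert_iff, Set.mem_singleton_iff]; decide)]
      simp
    have e4 : (0 : L) = b.repr z 2 • (-b 7) := by
      have hb42 : ⁅b 4, (b 2 : L)⁆ = -b 7 := by rw [← lie_skew, h3]
      rw [← hz' (b 4), hrep 4, Fin.sum_univ_eight, hb42]
      rw [hzero 4 0 (by simp only [Set.mem_insert_iff, Set.mem_singleton_iff]; decide), hzero 4 1 (by simp only [Set.mem_insert_iff, Set.mem_singleton_iff]; decide), hzero 4 3 (by simp only [Set.mem_insert_iff, Set.mem_singleton_iff]; decide),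
        hzero 4 4 (by simp only [Set.mem_insert_iff, Set.mem_singleton_iff]; decide), hzero 4 5 (by simp only [Set.mem_insert_iff, Set.mem_singleton_iff]; decide), hzero 4 6 (by simp only [Set.mem_insert_iff, Set.mem_singleton_iff]; decide),
        hzero 4 7 (by simp only [Set.mem_insert_iff, Set.mem_singleton_iff]; decide)]
      simp
    -- extract coefficient equalities
    have coeff : ∀ (c d : K) (k l : Fin 8), k ≠ l → (0 : L) = c • b k + d • b l → c = 0 ∧ d = 0 := by
      intro c d k l hkl h
      have h5 := congrArg (fun w => b.repr w k) h.symm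
      have h7 := congrArg (fun w => b.repr w l) h.symm
      simp [Finsupp.single_apply, hkl, hkl.symm] at h5 h7
      exact ⟨h5, h7⟩
    have e0' := coeff _ _ 5 7 (by decide) e0
    have e1' : b.repr z 0 = 0 ∧ b.repr z 6 = 0 := by
      have := coeff (-(b.repr z 0)) _ 5 7 (by decide) (by rw [neg_smul, ← smul_neg]; exact e1)
      exact ⟨by simpa using this.1, this.2⟩
    have e2' : b.repr z 4 = 0 := by
      have h5 := congrArg (fun w => b.repr w (7 : Fin 8)) e2.symm
      simpa [Finsupp.single_apply] using h5
    have e4' : b.repr z 2 = 0 := by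
      have h5 := congrArg (fun w => b.repr w (7 : Fin 8)) e4.symm
      simpa [Finsupp.single_apply, neg_eq_zero] using h5
    -- conclude
    have : z = b.repr z 5 • b 5 + b.repr z 7 • b 7 := by
      conv_lhs => rw [← b.sum_repr z]
      rw [Fin.sum_univ_eight, e0'.1, e0'.2, e1'.1, e1'.2, e2', e4']
      simp
    rw [this]
    exact Submodule.add_mem _ (Submodule.smul_mem _ _ (Submodule.subset_span (by simp)))
      (Submodule.smul_mem _ _ (Submodule.subset_span (by simp)))
  have center_eq : (LieAlgebra.center K L).toSubmodule = Submodule.span K ({b 5, b 7} : Set L) :=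
    le_antisymm center_le_span span_le_center
  -- lower central series 1
  have lcs1 : (LieModule.lowerCentralSeries K L L 1).toSubmodule = Submodule.span K ({b 5, b 7} : Set L) := by
    have : LieModule.lowerCentralSeries K L L 1 = ⁅(⊤ : LieIdeal K L), (⊤ : LieSubmodule K L L)⁆ := by
      rw [LieModule.lowerCentralSeries_succ, LieModule.lowerCentralSeries_zero]
    rw [this, LieSubmodule.lieIdeal_oper_eq_linear_span']
    apply le_antisymm
    · rw [Submodule.span_le]
      rintro m ⟨x, -, n, -, rfl⟩
      exact brkt x n
    · rw [Submodule.span_le]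
      rintro m hm
      simp only [Set.mem_insert_iff, Set.mem_singleton_iff] at hm
      rcases hm with rfl | rfl
      · exact Submodule.subset_span ⟨b 0, trivial, b 1, trivial, h1⟩
      · exact Submodule.subset_span ⟨b 0, trivial, b 3, trivial, h2⟩
  -- lcs 2 = ⊥
  have lcs2 : LieModule.lowerCentralSeries K L L 2 = ⊥ := by
    rw [show (2 : ℕ) = 1 + 1 from rfl, LieModule.lowerCentralSeries_succ]
    rw [eq_bot_iff]
    rw [LieSubmodule.lieIdeal_oper_eq_span, LieSubmodule.lieSpan_le]
    rintro m ⟨x, n, rfl⟩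
    have hn : (n : L) ∈ Submodule.span K ({b 5, b 7} : Set L) := by
      rw [← lcs1]; exact n.2
    rcases Submodule.mem_span_pair.mp hn with ⟨c, d, hcd⟩
    have : ⁅(x : L), (n : L)⁆ = 0 := by
      rw [← hcd, lie_add, lie_smul, lie_smul, (c57 x).1, (c57 x).2, smul_zero, smul_zero, add_zero]
    simp only [SetLike.mem_coe, this]
    exact (⊥ : LieSubmodule K L L).zero_mem
  -- lcs 1 ≠ ⊥
  have lcs1ne : LieModule.lowerCentralSeries K L L 1 ≠ ⊥ := by
    intro hbot
    have hb5 : (b 5 : L) ∈ (LieModule.lowerCentralSeries K L L 1).toSubmodule := by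
      rw [lcs1]; exact Submodule.subset_span (by simp)
    rw [hbot] at hb5
    exact b.ne_zero 5 (by simpa using hb5)
  -- finrank
  have hfr : Module.finrank K (LieModule.lowerCentralSeries K L L 1).toSubmodule = 2 := by
    rw [lcs1]
    have hrange : Set.range ![(b 5 : L), b 7] = {b 5, b 7} := by
      simp only [Matrix.range_cons, Matrix.range_empty, Set.union_empty, Set.union_singleton]
      exact Set.pair_comm _ _
    have hli : LinearIndependent K ![(b 5 : L), b 7] := by
      have hf : Function.Injective (![5, 7] : Fin 2 → Fin 8) := by decide
      have := b.linearIndependent.comp ![5, 7] hf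
      convert this using 1
      ext i
      fin_cases i <;> rfl
    rw [← hrange, finrank_span_eq_card hli, Fintype.card_fin]
  exact ⟨⟨lcs2, lcs1ne⟩, hfr, center_eq, center_eq.trans lcs1.symm, center_eq.trans lcs1.symm ▸ le_rfl⟩
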